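/- Let H be a Hilbert space and let {R_z} be a family of bounded operators on H indexed by z in a subset Z of the complex numbers, symmetric under conjugation, such that (R_z)* = R_{z̄} for all z and R_z − R_w = (w − z) R_z R_w for all z, w in Z (first resolvent identity). If for some z₀ in Z the operator R_{z₀} is injective, then R_{z₀} is the resolvent at z₀ of a self-adjoint operator; more precisely, the operator A := z₀·1 − R_{z₀}⁻¹ defined on dom(A) = ran(R_{z₀}) is self-adjoint and (−A + z₀)⁻¹ = R_{z₀}. -/

import Mathlib

open ComplexConjugate
noncomputable section

/-- `Rz` is the resolvent `(-A + z)⁻¹` of the (unbounded) operator `A` at `z`. -/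
def IsResolventAt {H : Type*} [NormedAddCommGroup H] [InnerProductSpace ℂ H] [CompleteSpace H]
    (A : H →ₗ.[ℂ] H) (z : ℂ) (Rz : H →L[ℂ] H) : Prop :=
  (∀ u : H, ∃ hu : Rz u ∈ A.domain, z • Rz u - A ⟨Rz u, hu⟩ = u) ∧
    ∀ x : A.domain, Rz (z • (x : H) - A x) = x

/-- A conjugation-symmetric pseudo-resolvent family which is injective at some
point `z₀` is the resolvent family of a self-adjoint operator at `z₀`; the operator is
`A = z₀·1 − R_{z₀}⁻¹` with domain `ran (R_{z₀})`. -/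
theorem statement_0 {H : Type*} [NormedAddCommGroup H] [InnerProductSpace ℂ H] [CompleteSpace H]
    (Z : Set ℂ) (hZconj : ∀ z ∈ Z, conj z ∈ Z)
    (R : ℂ → H →L[ℂ] H)
    (hadj : ∀ z ∈ Z, (R z).adjoint = R (conj z))
    (hres : ∀ z ∈ Z, ∀ w ∈ Z, R z - R w = (w - z) • ((R z).comp (R w)))
    (z₀ : ℂ) (hz₀ : z₀ ∈ Z) (hinj : Function.Injective (R z₀)) :
    ∃ A : H →ₗ.[ℂ] H, IsSelfAdjoint A ∧
      A.domain = LinearMap.range ((R z₀ : H →ₗ[ℂ] H)) ∧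
      IsResolventAt A z₀ (R z₀) ∧
      ∀ (u : H) (hu : R z₀ u ∈ A.domain), A ⟨R z₀ u, hu⟩ = z₀ • R z₀ u - u := by
  set T := R z₀ with hTdef
  set S := R (conj z₀) with hSdef
  have hzc : conj z₀ ∈ Z := hZconj z₀ hz₀
  have hT : ContinuousLinearMap.adjoint T = S := hadj z₀ hz₀
  have hS : ContinuousLinearMap.adjoint S = T := by
    have := hadj _ hzc
    rwa [Complex.conj_conj] at this
  have hres1 : T - S = (conj z₀ - z₀) • (T.comp S) := hres z₀ hz₀ _ hzc
  have hres2 : S - T = (z₀ - conj z₀) • (S.comp T) := hres _ hzc z₀ hz₀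
  -- T and S commute
  have hcomm : T.comp S = S.comp T := by
    by_cases h : conj z₀ = z₀
    · rw [hSdef, h, ← hTdef]
    · have h1 : (conj z₀ - z₀) • (T.comp S) = (conj z₀ - z₀) • (S.comp T) := by
        rw [← hres1]
        have : T - S = -(S - T) := by abel
        rw [this, hres2, ← neg_smul]
        ring_nf
      exact smul_right_injective _ (sub_ne_zero.mpr h) h1
  -- S is injective
  have hSinj : Function.Injective S := by
    intro x y hxy
    have h0 : S (x - y) = 0 := by rw [map_sub, hxy, sub_self]
    have h1 : T (x - y) - S (x - y) = (conj z₀ - z₀) • T (S (x - y)) := by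
      have := congrArg (fun f : H →L[ℂ] H => f (x - y)) hres1
      simpa using this
    have h2 : T (x - y) = 0 := by
      rw [h0, map_zero, smul_zero, sub_zero] at h1
      exact h1
    have := hinj (h2.trans (map_zero T).symm)
    exact sub_eq_zero.mp this
  -- inner product transfer lemmas
  have hTinner : ∀ a b : H, inner ℂ (T a) b = (inner ℂ a (S b) : ℂ) := by
    intro a b
    rw [← hS]
    exact ContinuousLinearMap.adjoint_inner_left S b a
  have hSinner : ∀ a b : H, inner ℂ (S a) b = (inner ℂ a (T b) : ℂ) := by
    intro a b
    rw [← hT]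
    exact ContinuousLinearMap.adjoint_inner_left T b a
  -- the range of T is dense
  have hdense : Dense ((LinearMap.range ((R z₀ : H →ₗ[ℂ] H)) : Submodule ℂ H) : Set H) := by
    rw [Submodule.dense_iff_topologicalClosure_eq_top,
      Submodule.topologicalClosure_eq_top_iff]
    rw [Submodule.eq_bot_iff]
    intro x hx
    have hSx : S x = 0 := by
      have : (inner ℂ (S x) (S x) : ℂ) = 0 := by
        rw [hSinner]
        have := (Submodule.mem_orthogonal' _ x).mp hx (T (S x))
          (LinearMap.mem_range_self _ (S x))
        exact this
      exact inner_self_eq_zero.mp this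
    have := hSinj (hSx.trans (map_zero S).symm)
    exact this
  -- the operator A
  set Tl := ((R z₀ : H →ₗ[ℂ] H)) with hTldef
  have hinjl : Function.Injective Tl := hinj
  set dom := LinearMap.range Tl with hdomdef
  set e := LinearEquiv.ofInjective Tl hinjl with hedef
  set A : H →ₗ.[ℂ] H :=
    ⟨dom, z₀ • dom.subtype - (e.symm : dom →ₗ[ℂ] H)⟩ with hAdef
  have hAdom : A.domain = dom := rfl
  -- value of A on elements of the range
  have hAval : ∀ (u : H) (hu : T u ∈ A.domain), A ⟨T u, hu⟩ = z₀ • T u - u := by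
    intro u hu
    have hesymm : e.symm ⟨T u, hu⟩ = u := by
      apply hinjl
      have h5 := LinearEquiv.ofInjective_symm_apply (f := Tl) (h := hinjl)
        (x := (⟨T u, hu⟩ : LinearMap.range Tl))
      exact h5
    show (z₀ • dom.subtype - (e.symm : dom →ₗ[ℂ] H)) ⟨T u, hu⟩ = z₀ • T u - u
    simp [hesymm]
  have hmemT : ∀ u : H, T u ∈ A.domain := fun u => LinearMap.mem_range_self Tl u
  -- every element of the domain is T u for some u
  have hAsurj : ∀ x : A.domain, ∃ u : H, T u = (x : H) := by
    rintro ⟨x, ⟨u, rfl⟩⟩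
    exact ⟨u, rfl⟩
  -- key inner-product identity
  have hkey : ∀ u v : H,
      (inner ℂ (T u) v : ℂ) - inner ℂ u (T v) = (z₀ - conj z₀) * inner ℂ (T u) (T v) := by
    intro u v
    have h1 : (inner ℂ u (T v) : ℂ) = inner ℂ (S u) v := (hSinner u v).symm
    rw [h1, ← inner_sub_left]
    have h2 : T u - S u = ((conj z₀ - z₀) • (S.comp T)) u := by
      rw [← hcomm, ← hres1]; simp
    rw [show T u - S u = (conj z₀ - z₀) • (S (T u)) by simpa using h2]
    rw [inner_smul_left, hSinner]
    simp only [map_sub, Complex.conj_conj]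
    try ring
  -- A is formally self-adjoint (symmetric)
  have hsymm : A.IsFormalAdjoint A := by
    intro x y
    obtain ⟨u, hu⟩ := hAsurj x
    obtain ⟨v, hv⟩ := hAsurj y
    have hx : x = ⟨T u, hmemT u⟩ := Subtype.ext hu.symm
    have hy : y = ⟨T v, hmemT v⟩ := Subtype.ext hv.symm
    rw [hx, hy, hAval u, hAval v]
    simp only [inner_sub_left, inner_sub_right, inner_smul_left, inner_smul_right]
    have h1 : (inner ℂ u (T v) : ℂ) = inner ℂ (T u) v - (z₀ - conj z₀) * inner ℂ (T u) (T v) := by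
      linear_combination - hkey u v
    rw [h1]
    ring
  -- A has dense domain
  have hdenseA : Dense (A.domain : Set H) := hdense
  -- A ≤ A†
  have hle : A ≤ A.adjoint := LinearPMap.IsFormalAdjoint.le_adjoint hdenseA hsymm
  -- A† ≤ A
  have hge : A.adjoint ≤ A := by
    have hfa : A.adjoint.IsFormalAdjoint A := LinearPMap.adjoint_isFormalAdjoint hdenseA
    -- main computation: for y in the domain of the adjoint, y ∈ ran T and A y = A† y
    have hmain : ∀ (y : H) (hy : y ∈ A.adjoint.domain),
        ∃ hm : y ∈ A.domain, A ⟨y, hm⟩ = A.adjoint ⟨y, hy⟩ := by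
      intro y hy
      set w := A.adjoint ⟨y, hy⟩ with hwdef
      have hSw : S w = conj z₀ • S y - y := by
        apply ext_inner_right ℂ
        intro u
        have h1 : (inner ℂ (S w) u : ℂ) = inner ℂ w (T u) := hSinner w u
        have h2 : (inner ℂ w (T u) : ℂ) = inner ℂ y (A ⟨T u, hmemT u⟩) :=
          hfa ⟨y, hy⟩ ⟨T u, hmemT u⟩
        rw [h1, h2, hAval u]
        rw [inner_sub_right, inner_smul_right]
        have h3' : (inner ℂ y (T u) : ℂ) = inner ℂ (S y) u := (hSinner y u).symm
        rw [h3']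
        rw [inner_sub_left, inner_smul_left, Complex.conj_conj]
      set c := conj z₀ • y - w with hcdef
      have hSc : S c = y := by
        rw [hcdef, map_sub, map_smul, hSw]
        abel
      -- y is in the range of T
      have hyT : T (c + (z₀ - conj z₀) • y) = y := by
        have hcomm' : T (S c) = S (T c) :=
          congrArg (fun f : H →L[ℂ] H => f c) hcomm
        have h4 : S c - T c = (z₀ - conj z₀) • T (S c) := by
          have h := congrArg (fun f : H →L[ℂ] H => f c) hres2
          simp only [ContinuousLinearMap.sub_apply, ContinuousLinearMap.smul_apply,
            ContinuousLinearMap.comp_apply] at h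
          rw [hcomm']
          exact h
        rw [hSc] at h4
        rw [map_add, map_smul, ← h4]
        abel
      have hm : y ∈ A.domain := ⟨c + (z₀ - conj z₀) • y, hyT⟩
      refine ⟨hm, ?_⟩
      have := hAval (c + (z₀ - conj z₀) • y) (hmemT _)
      have heq : (⟨y, hm⟩ : A.domain) = ⟨T (c + (z₀ - conj z₀) • y), hmemT _⟩ :=
        Subtype.ext hyT.symm
      rw [heq, this, hyT, hcdef]
      module
    constructor
    · intro y hy
      exact (hmain y hy).1
    · rintro ⟨x, hx⟩ y hxy
      obtain ⟨hm, hAeq⟩ := hmain x hx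
      have : y = ⟨x, hm⟩ := Subtype.ext hxy.symm
      rw [this, hAeq]
  have hSA : IsSelfAdjoint A := le_antisymm hge hle
  refine ⟨A, hSA, rfl, ⟨?_, ?_⟩, hAval⟩
  · intro u
    refine ⟨hmemT u, ?_⟩
    rw [hAval u (hmemT u)]
    abel
  · intro x
    obtain ⟨u, hu⟩ := hAsurj x
    have hx : x = ⟨T u, hmemT u⟩ := Subtype.ext hu.symm
    rw [hx, hAval u (hmemT u)]
    have : z₀ • T u - (z₀ • T u - u) = u := by abel
    rw [this]
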